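/- arXiv:1408.0822 — 3 statements merged into one kernel-verified Lean document; each statement's English description precedes it below -/
import Mathlib

section
/- Let X be a reversible, irreducible Markov chain with finite state space S. Let x ∈ S and let U ⊆ S be a subset not containing x. Then there exist real numbers a_1, …, a_{|S|} ≥ 0 and λ_1, …, λ_{|S|} ∈ [−1, 1] such that for every integer t ≥ 0, P_x(X_t = x and τ(U) > t) = Σ_{i=1}^{|S|} a_i λ_i^t, where τ(U) = min{s ≥ 0 : X_s ∈ U}. Moreover, if all eigenvalues of the transition matrix of X are non-negative, then the λ_i may be taken in [0, 1]. -/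
open Finset
open scoped Matrix

/-- A (row-)stochastic transition matrix: the transition kernel of a Markov chain
on the finite state space `S`. -/
def IsStochastic {S : Type*} [Fintype S] (p : Matrix S S ℝ) : Prop :=
  (∀ a b, 0 ≤ p a b) ∧ ∀ a, ∑ b, p a b = 1

/-- `π` is a stationary distribution for the transition matrix `p`. -/
def IsStationaryDistrib {S : Type*} [Fintype S] (p : Matrix S S ℝ) (π : S → ℝ) : Prop :=
  (∀ a, 0 ≤ π a) ∧ (∑ a, π a = 1) ∧ ∀ b, ∑ a, π a * p a b = π b

/-- The chain with transition matrix `p` is reversible with respect to `π`. -/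
def IsReversible {S : Type*} [Fintype S] (p : Matrix S S ℝ) (π : S → ℝ) : Prop :=
  ∀ a b, π a * p a b = π b * p b a

/-- The probability weight of a finite trajectory `z 0, z 1, …, z m` of the chain. -/
noncomputable def pathWeight {S : Type*} (p : Matrix S S ℝ) {m : ℕ} (z : Fin (m + 1) → S) : ℝ :=
  ∏ i : Fin m, p (z i.castSucc) (z i.succ)

open scoped Classical in
/-- `P_x(A)` for an event `A` depending on the trajectory `X_0, X_1, …, X_m`
of the chain started at `x`. -/
noncomputable def eventProb {S : Type*} [Fintype S] (p : Matrix S S ℝ) (x : S) (m : ℕ)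
    (A : (Fin (m + 1) → S) → Prop) : ℝ :=
  ∑ z : Fin (m + 1) → S, if z 0 = x ∧ A z then pathWeight p z else 0

/-- `P_x(τ(y) = t)`: the probability that the chain started at `x` first visits `y`
exactly at time `t`. -/
noncomputable def hitProbEq {S : Type*} [Fintype S] (p : Matrix S S ℝ) (x y : S) (t : ℕ) : ℝ :=
  eventProb p x t fun z => z (Fin.last t) = y ∧ ∀ i : Fin (t + 1), (i : ℕ) < t → z i ≠ y

/-- `P_x(X_t = x, τ(U) > t)`: the chain started at `x` is back at `x` at time `t`
without having visited `U`. -/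
noncomputable def avoidReturnProb {S : Type*} [Fintype S] (p : Matrix S S ℝ)
    (x : S) (U : Finset S) (t : ℕ) : ℝ :=
  eventProb p x t fun z => z (Fin.last t) = x ∧ ∀ i : Fin (t + 1), z i ∉ U

-- ===== auxiliary lemmas =====
section Aux
variable {S : Type*} [Fintype S] [DecidableEq S]

open scoped Classical in
lemma pow_entry_eq_sum_paths {S : Type*} [Fintype S] [DecidableEq S] (q : Matrix S S ℝ) :
    ∀ (t : ℕ) (x y : S),
      (q ^ t) x y = ∑ z : Fin (t + 1) → S,
        if z 0 = x ∧ z (Fin.last t) = y then pathWeight q z else 0 := by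
  intro t
  induction t with
  | zero =>
    intro x y
    rw [Fintype.sum_equiv (Equiv.funUnique (Fin 1) S) _
      (fun s => if s = x ∧ s = y then (1:ℝ) else 0) (fun z => by
        have h0 : z (Fin.last 0) = z 0 := congrArg z (Subsingleton.elim _ _)
        have hd : z default = z 0 := congrArg z (Subsingleton.elim _ _)
        have hw : pathWeight q z = 1 := by simp [pathWeight]
        simp only [Equiv.funUnique_apply, h0, hd, hw])]
    by_cases hxy : x = y
    · subst hxy
      simp [Matrix.one_apply]
    · rw [Finset.sum_eq_zero (fun s _ => by
        simp only [ite_eq_right_iff]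
        rintro ⟨rfl, rfl⟩; exact absurd rfl hxy)]
      simp [Matrix.one_apply, hxy]
  | succ t ih =>
    intro x y
    have key : ∀ (w : S) (f : Fin (t+1) → S),
        pathWeight q (Fin.snoc f w) = pathWeight q f * q (f (Fin.last t)) w := by
      intro w f
      unfold pathWeight
      rw [Fin.prod_univ_castSucc]
      congr 1
      · apply Finset.prod_congr rfl
        intro i _
        have h1 : (Fin.snoc f w : Fin (t+2) → S) i.castSucc.castSucc = f i.castSucc :=
          Fin.snoc_castSucc ..
        have h2 : (Fin.snoc f w : Fin (t+2) → S) i.castSucc.succ = f i.succ := by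
          rw [Fin.succ_castSucc]; exact Fin.snoc_castSucc ..
        rw [h1, h2]
      · have h1 : (Fin.snoc f w : Fin (t+2) → S) (Fin.last t).castSucc = f (Fin.last t) :=
          Fin.snoc_castSucc ..
        have h2 : (Fin.snoc f w : Fin (t+2) → S) (Fin.last t).succ = w := by
          rw [Fin.succ_last]; exact Fin.snoc_last ..
        rw [h1, h2]
    rw [Fintype.sum_equiv (Fin.snocEquiv (fun _ => S)).symm _
      (fun (wf : S × (Fin (t+1) → S)) =>
        if wf.2 0 = x ∧ wf.1 = y then pathWeight q wf.2 * q (wf.2 (Fin.last t)) wf.1 else 0)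
      (fun z => by
        have hkey := key (z (Fin.last (t+1))) (Fin.init z)
        rw [Fin.snoc_init_self] at hkey
        have h0 : Fin.init z 0 = z 0 := by
          show z _ = z 0
          congr 1
        simp only [Fin.snocEquiv, Equiv.coe_fn_symm_mk, h0, ← hkey])]
    rw [Fintype.sum_prod_type]
    have step : ∀ w : S, (∑ f : Fin (t+1) → S,
        if f 0 = x ∧ w = y then pathWeight q f * q (f (Fin.last t)) w else 0)
        = if w = y then (∑ f : Fin (t+1) → S,
            if f 0 = x then pathWeight q f * q (f (Fin.last t)) w else 0) else 0 := by
      intro w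
      by_cases hw : w = y <;> simp [hw]
    simp only [step]
    rw [Finset.sum_ite_eq' univ y, if_pos (mem_univ y)]
    have step2 : ∀ f : Fin (t+1) → S,
        (if f 0 = x then pathWeight q f * q (f (Fin.last t)) y else 0)
        = ∑ c : S, if f 0 = x ∧ f (Fin.last t) = c then pathWeight q f * q c y else 0 := by
      intro f
      simp only [ite_and]
      by_cases hf : f 0 = x
      · simp only [hf, if_true, eq_self_iff_true]
        rw [Finset.sum_ite_eq univ (f (Fin.last t)) (fun c => pathWeight q f * q c y),
          if_pos (mem_univ _)]
      · simp [hf]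
    simp only [step2]
    rw [Finset.sum_comm]
    have step3 : ∀ c : S, (∑ f : Fin (t+1) → S,
        if f 0 = x ∧ f (Fin.last t) = c then pathWeight q f * q c y else 0)
        = (q ^ t) x c * q c y := by
      intro c
      rw [ih x c, Finset.sum_mul]
      exact Finset.sum_congr rfl fun f _ => by simp [ite_mul]
    simp only [step3]
    rw [pow_succ, Matrix.mul_apply]


lemma conj_pow_apply (A : Matrix S S ℝ) (d : S → ℝ) (hd : ∀ a, d a ≠ 0) :
    ∀ (t : ℕ) (a b : S),
      ((Matrix.of fun a b => d a * A a b * (d b)⁻¹) ^ t) a b = d a * (A ^ t) a b * (d b)⁻¹ := by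
  intro t
  induction t with
  | zero =>
    intro a b
    by_cases hab : a = b
    · subst hab; simp [Matrix.one_apply, mul_inv_cancel₀ (hd a)]
    · simp [Matrix.one_apply, hab]
  | succ t ih =>
    intro a b
    rw [pow_succ, pow_succ, Matrix.mul_apply, Matrix.mul_apply, Finset.mul_sum,
      Finset.sum_mul]
    refine Finset.sum_congr rfl fun c _ => ?_
    rw [ih]
    simp only [Matrix.of_apply]
    rw [show d a * (A ^ t) a c * (d c)⁻¹ * (d c * A c b * (d b)⁻¹)
        = ((d c)⁻¹ * d c) * (d a * (A ^ t) a c * A c b * (d b)⁻¹) by ring,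
      inv_mul_cancel₀ (hd c), one_mul]
    ring

lemma conj_mulVec (A : Matrix S S ℝ) (d : S → ℝ) (hd : ∀ a, d a ≠ 0) (v : S → ℝ) (lam : ℝ)
    (h : Matrix.mulVec (Matrix.of fun a b => d a * A a b * (d b)⁻¹) v = lam • v) :
    Matrix.mulVec A (fun a => (d a)⁻¹ * v a) = lam • (fun a => (d a)⁻¹ * v a) := by
  funext a
  have ha := congrFun h a
  simp only [Matrix.mulVec, dotProduct, Matrix.of_apply, Pi.smul_apply,
    smul_eq_mul] at ha ⊢
  have h2 : ∑ b, A a b * ((d b)⁻¹ * v b) = (d a)⁻¹ * ∑ b, d a * A a b * (d b)⁻¹ * v b := by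
    rw [Finset.mul_sum]
    refine Finset.sum_congr rfl fun b _ => ?_
    rw [show (d a)⁻¹ * (d a * A a b * (d b)⁻¹ * v b)
        = ((d a)⁻¹ * d a) * (A a b * ((d b)⁻¹ * v b)) by ring,
      inv_mul_cancel₀ (hd a), one_mul]
  rw [h2, ha]
  ring

lemma eig_abs_le_one (q : Matrix S S ℝ) (hq0 : ∀ a b, 0 ≤ q a b) (hq1 : ∀ a, ∑ b, q a b ≤ 1)
    (lam : ℝ) (u : S → ℝ) (hu : u ≠ 0) (heig : Matrix.mulVec q u = lam • u) : |lam| ≤ 1 := by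
  obtain ⟨b0, hb0⟩ := Function.ne_iff.1 hu
  obtain ⟨a0, -, ha0⟩ := Finset.exists_max_image univ (fun a => |u a|) ⟨b0, mem_univ b0⟩
  have hpos : 0 < |u a0| := lt_of_lt_of_le (abs_pos.2 hb0) (ha0 b0 (mem_univ b0))
  have key : |lam| * |u a0| ≤ |u a0| := by
    rw [← abs_mul]
    have h1 : lam * u a0 = ∑ b, q a0 b * u b := by
      have h := congrFun heig a0
      simp only [Matrix.mulVec, dotProduct, Pi.smul_apply, smul_eq_mul] at h
      rw [h]
    rw [h1]
    calc |∑ b, q a0 b * u b| ≤ ∑ b, |q a0 b * u b| := Finset.abs_sum_le_sum_abs _ _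
      _ ≤ ∑ b, q a0 b * |u a0| := by
          refine Finset.sum_le_sum fun b _ => ?_
          rw [abs_mul, abs_of_nonneg (hq0 a0 b)]
          exact mul_le_mul_of_nonneg_left (ha0 b (mem_univ b)) (hq0 a0 b)
      _ = (∑ b, q a0 b) * |u a0| := by rw [Finset.sum_mul]
      _ ≤ 1 * |u a0| := mul_le_mul_of_nonneg_right (hq1 a0) (abs_nonneg _)
      _ = |u a0| := one_mul _
  have := le_of_mul_le_mul_right (key.trans_eq (one_mul _).symm) hpos
  linarith

lemma conj_diag_pow (U : Matrix S S ℝ) (w : S → ℝ) (hU : star U * U = 1) (s : ℕ) :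
    (U * Matrix.diagonal w * star U) ^ s
      = U * Matrix.diagonal (fun i => w i ^ s) * star U := by
  induction s with
  | zero =>
    have h1 : (Matrix.diagonal fun i : S => w i ^ 0) = (1 : Matrix S S ℝ) := by simp
    rw [pow_zero, h1, mul_one]
    exact (mul_eq_one_comm.mp hU).symm
  | succ s ih =>
    rw [pow_succ, ih,
      show U * Matrix.diagonal (fun i => w i ^ s) * star U * (U * Matrix.diagonal w * star U)
        = U * (Matrix.diagonal (fun i => w i ^ s) * (star U * U) * Matrix.diagonal w) * star U
        by noncomm_ring,
      hU, mul_one, Matrix.diagonal_mul_diagonal]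
    simp [pow_succ]

lemma herm_pow_apply (A : Matrix S S ℝ) (hA : A.IsHermitian) (x : S) (t : ℕ) :
    (A ^ t) x x = ∑ i : S,
      ((hA.eigenvectorUnitary : Matrix S S ℝ) x i) ^ 2 * hA.eigenvalues i ^ t := by
  have hU : star (hA.eigenvectorUnitary : Matrix S S ℝ)
      * (hA.eigenvectorUnitary : Matrix S S ℝ) = 1 :=
    (Matrix.mem_unitaryGroup_iff').mp hA.eigenvectorUnitary.2
  have h2 : A = (hA.eigenvectorUnitary : Matrix S S ℝ) * Matrix.diagonal hA.eigenvalues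
      * star (hA.eigenvectorUnitary : Matrix S S ℝ) := by
    simpa [Function.comp] using hA.spectral_theorem
  have h1 : A ^ t = (hA.eigenvectorUnitary : Matrix S S ℝ)
      * Matrix.diagonal (fun i => hA.eigenvalues i ^ t)
      * star (hA.eigenvectorUnitary : Matrix S S ℝ) := by
    conv_lhs => rw [h2]
    exact conj_diag_pow _ _ hU t
  rw [h1, Matrix.mul_apply]
  refine Finset.sum_congr rfl fun i _ => ?_
  rw [Matrix.mul_diagonal, Matrix.star_apply, star_trivial]
  ring



open scoped Classical in
lemma avoid_eq_pow (p : Matrix S S ℝ) (x : S) (U : Finset S) (hxU : x ∉ U) (t : ℕ) :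
    avoidReturnProb p x U t
      = ((Matrix.of fun a b => if a ∈ U ∨ b ∈ U then (0:ℝ) else p a b) ^ t) x x := by
  rw [pow_entry_eq_sum_paths]
  unfold avoidReturnProb eventProb
  refine Finset.sum_congr rfl fun z _ => ?_
  by_cases h1 : z 0 = x ∧ z (Fin.last t) = x
  · by_cases h2 : ∀ i, z i ∉ U
    · rw [if_pos ⟨h1.1, h1.2, h2⟩, if_pos h1]
      unfold pathWeight
      refine Finset.prod_congr rfl fun i _ => ?_
      have hni : ¬(z i.castSucc ∈ U ∨ z i.succ ∈ U) := by
        push_neg; exact ⟨h2 _, h2 _⟩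
      rw [Matrix.of_apply, if_neg hni]
    · rw [if_neg (fun hc => h2 hc.2.2), if_pos h1]
      push_neg at h2
      obtain ⟨i, hi⟩ := h2
      have hine : i ≠ Fin.last t := by
        intro he
        rw [he, h1.2] at hi
        exact hxU hi
      obtain ⟨j, rfl⟩ := Fin.exists_castSucc_eq.mpr hine
      symm
      unfold pathWeight
      apply Finset.prod_eq_zero (Finset.mem_univ j)
      rw [Matrix.of_apply, if_pos (Or.inl hi)]
  · rw [if_neg (fun hc => h1 ⟨hc.1, hc.2.1⟩), if_neg h1]

end Aux


/-- Lemma 14 (spectral decomposition): for a reversible irreducible chain, `x ∉ U`,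
there are `a_i ≥ 0` and `λ_i ∈ [-1, 1]` with
`P_x(X_t = x, τ(U) > t) = Σ_i a_i λ_i^t` for all `t`; if all eigenvalues of the
transition matrix are non-negative, the `λ_i` may be taken in `[0, 1]`. -/
theorem spectral_decomposition_avoidReturnProb {S : Type*} [Fintype S] [DecidableEq S]
    (p : Matrix S S ℝ) (π : S → ℝ)
    (hp : IsStochastic p) (hstat : IsStationaryDistrib p π) (hrev : IsReversible p π)
    (hirr : ∀ a b : S, ∃ s : ℕ, 0 < (p ^ s) a b)
    (x : S) (U : Finset S) (hxU : x ∉ U) :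
    (∃ a lam : Fin (Fintype.card S) → ℝ,
        (∀ i, 0 ≤ a i) ∧ (∀ i, lam i ∈ Set.Icc (-1 : ℝ) 1) ∧
          ∀ t : ℕ, avoidReturnProb p x U t = ∑ i, a i * lam i ^ t) ∧
      ((∀ μ : ℂ, Module.End.HasEigenvalue (Matrix.toLin' (p.map Complex.ofReal)) μ →
            ∃ r : ℝ, μ = (r : ℂ) ∧ 0 ≤ r) →
        ∃ a lam : Fin (Fintype.card S) → ℝ,
          (∀ i, 0 ≤ a i) ∧ (∀ i, lam i ∈ Set.Icc (0 : ℝ) 1) ∧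
            ∀ t : ℕ, avoidReturnProb p x U t = ∑ i, a i * lam i ^ t) := by
  classical
  obtain ⟨hp0, hp1⟩ := hp
  obtain ⟨hπ0, hπsum, hπstat⟩ := hstat
  -- entrywise nonnegativity of powers
  have hpow0 : ∀ (s : ℕ) (a b : S), 0 ≤ (p ^ s) a b := by
    intro s
    induction s with
    | zero =>
      intro a b
      by_cases h : a = b <;> simp [Matrix.one_apply, h]
    | succ s ih =>
      intro a b
      rw [pow_succ, Matrix.mul_apply]
      exact Finset.sum_nonneg fun c _ => mul_nonneg (ih a c) (hp0 c b)
  -- stationarity for powers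
  have hstatpow : ∀ (s : ℕ) (b : S), ∑ a, π a * (p ^ s) a b = π b := by
    intro s
    induction s with
    | zero =>
      intro b
      simp [Matrix.one_apply, mul_ite, Finset.sum_ite_eq']
    | succ s ih =>
      intro b
      have h1 : ∀ a : S, π a * (p ^ (s+1)) a b = ∑ c, π a * ((p ^ s) a c * p c b) := by
        intro a
        rw [pow_succ, Matrix.mul_apply, Finset.mul_sum]
      rw [Finset.sum_congr rfl fun a _ => h1 a, Finset.sum_comm]
      have h2 : ∀ c : S, (∑ a, π a * ((p ^ s) a c * p c b))
          = (∑ a, π a * (p ^ s) a c) * p c b := by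
        intro c
        rw [Finset.sum_mul]
        exact Finset.sum_congr rfl fun a _ => by ring
      rw [Finset.sum_congr rfl fun c _ => h2 c]
      rw [Finset.sum_congr rfl fun c _ => by rw [ih c]]
      exact hπstat b
  -- positivity of the stationary distribution
  have hπpos : ∀ a, 0 < π a := by
    have hex : ∃ a0 : S, 0 < π a0 := by
      by_contra h
      push_neg at h
      have hle : ∑ a, π a ≤ 0 := Finset.sum_nonpos fun a _ => h a
      linarith
    obtain ⟨a0, ha0⟩ := hex
    intro b
    obtain ⟨s, hs⟩ := hirr a0 b
    have h1 : π a0 * (p ^ s) a0 b ≤ ∑ a, π a * (p ^ s) a b :=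
      Finset.single_le_sum (fun a _ => mul_nonneg (hπ0 a) (hpow0 s a b)) (mem_univ a0)
    rw [hstatpow s b] at h1
    exact lt_of_lt_of_le (mul_pos ha0 hs) h1
  set d : S → ℝ := fun a => Real.sqrt (π a) with hd
  have hdpos : ∀ a, 0 < d a := fun a => Real.sqrt_pos.2 (hπpos a)
  have hdne : ∀ a, d a ≠ 0 := fun a => (hdpos a).ne'
  have hdsq : ∀ a, d a * d a = π a := fun a => Real.mul_self_sqrt (hπ0 a)
  set q : Matrix S S ℝ := Matrix.of fun a b => if a ∈ U ∨ b ∈ U then 0 else p a b with hq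
  have hq0 : ∀ a b, 0 ≤ q a b := by
    intro a b
    rw [hq]
    simp only [Matrix.of_apply]
    split_ifs with h
    · exact le_rfl
    · exact hp0 a b
  have hqle : ∀ a b, q a b ≤ p a b := by
    intro a b
    rw [hq]
    simp only [Matrix.of_apply]
    split_ifs with h
    · exact hp0 a b
    · exact le_rfl
  have hq1 : ∀ a, ∑ b, q a b ≤ 1 := fun a =>
    le_of_le_of_eq (Finset.sum_le_sum fun b _ => hqle a b) (hp1 a)
  have hqrev : ∀ a b, π a * q a b = π b * q b a := by
    intro a b
    rw [hq]
    simp only [Matrix.of_apply]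
    by_cases h : a ∈ U ∨ b ∈ U
    · rw [if_pos h, if_pos (Or.symm h), mul_zero, mul_zero]
    · rw [if_neg h, if_neg (fun hc => h (Or.symm hc))]
      exact hrev a b
  set M : Matrix S S ℝ := Matrix.of fun a b => d a * q a b * (d b)⁻¹ with hM
  -- symmetry helper
  have symm_of_rev : ∀ (A : Matrix S S ℝ), (∀ a b, π a * A a b = π b * A b a) →
      (Matrix.of fun a b => d a * A a b * (d b)⁻¹).IsHermitian := by
    intro A hA
    show (Matrix.of fun a b => d a * A a b * (d b)⁻¹)ᴴ = _
    ext a b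
    rw [Matrix.conjTranspose_apply, star_trivial]
    simp only [Matrix.of_apply]
    have h := hA a b
    have hAba : A b a = d a * d a * A a b / (d b * d b) := by
      rw [hdsq a, hdsq b]
      field_simp [(hπpos b).ne']
      linarith [h]
    rw [hAba]
    field_simp [hdne a, hdne b]
  have hMh : M.IsHermitian := by
    rw [hM]; exact symm_of_rev q hqrev
  -- avoidReturnProb as a power of M
  have havoid : ∀ t : ℕ, avoidReturnProb p x U t = (M ^ t) x x := by
    intro t
    rw [avoid_eq_pow p x U hxU t]
    have hc := conj_pow_apply q d hdne t x x
    rw [← hM] at hc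
    rw [hc, mul_comm (d x) ((q ^ t) x x), mul_assoc, mul_inv_cancel₀ (hdne x), mul_one]
  -- eigenvalue bound
  have heigbound : ∀ i : S, |hMh.eigenvalues i| ≤ 1 := by
    intro i
    have hv := hMh.mulVec_eigenvectorBasis i
    have hu := conj_mulVec q d hdne _ _ hv
    have hvne : (⇑(hMh.eigenvectorBasis i) : S → ℝ) ≠ 0 := by
      have h := hMh.eigenvectorBasis.orthonormal.ne_zero i
      intro hc
      apply h
      ext a
      exact congrFun hc a
    have hune : (fun a => (d a)⁻¹ * (hMh.eigenvectorBasis i) a) ≠ 0 := by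
      obtain ⟨a, ha⟩ := Function.ne_iff.1 hvne
      intro hc
      have := congrFun hc a
      simp only [Pi.zero_apply] at this
      exact ha (by
        rcases mul_eq_zero.1 this with h' | h'
        · exact absurd h' (inv_ne_zero (hdne a))
        · simpa using h')
    exact eig_abs_le_one q hq0 hq1 _ _ hune hu
  -- the coefficients
  set e : S ≃ Fin (Fintype.card S) := Fintype.equivFin S with he
  set Uu : Matrix S S ℝ := (hMh.eigenvectorUnitary : Matrix S S ℝ) with hUu
  refine ⟨⟨fun i => (Uu x (e.symm i)) ^ 2, fun i => hMh.eigenvalues (e.symm i),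
      fun i => sq_nonneg _, fun i => ?_, fun t => ?_⟩, fun hcomplex => ?_⟩
  · exact Set.mem_Icc.2 (abs_le.1 (heigbound (e.symm i)))
  · rw [havoid t, herm_pow_apply M hMh x t]
    exact (Fintype.sum_equiv e.symm _ _ fun i => rfl).symm
  -- second part
  · set N : Matrix S S ℝ := Matrix.of fun a b => d a * p a b * (d b)⁻¹ with hN
    have hNh : N.IsHermitian := by rw [hN]; exact symm_of_rev p hrev
    have hNeig : ∀ j : S, 0 ≤ hNh.eigenvalues j := by
      intro j
      have hv := hNh.mulVec_eigenvectorBasis j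
      have hu := conj_mulVec p d hdne _ _ hv
      set u : S → ℝ := fun a => (d a)⁻¹ * (hNh.eigenvectorBasis j) a with hud
      have hvne : (⇑(hNh.eigenvectorBasis j) : S → ℝ) ≠ 0 := by
        have h := hNh.eigenvectorBasis.orthonormal.ne_zero j
        intro hc
        apply h
        ext a
        exact congrFun hc a
      have hune : u ≠ 0 := by
        obtain ⟨a, ha⟩ := Function.ne_iff.1 hvne
        intro hc
        have := congrFun hc a
        simp only [hud, Pi.zero_apply] at this
        exact ha (by
          rcases mul_eq_zero.1 this with h' | h'
          · exact absurd h' (inv_ne_zero (hdne a))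
          · simpa using h')
      set w : S → ℂ := fun a => ((u a : ℝ) : ℂ) with hwd
      have hw0 : w ≠ 0 := by
        intro hc
        apply hune
        funext a
        have := congrFun hc a
        simp only [hwd, Pi.zero_apply] at this
        exact_mod_cast this
      have hweig : (p.map Complex.ofReal).mulVec w = ((hNh.eigenvalues j : ℝ) : ℂ) • w := by
        funext a
        have h := congrFun hu a
        simp only [Matrix.mulVec, dotProduct, Pi.smul_apply, smul_eq_mul] at h
        simp only [Matrix.mulVec, dotProduct, Matrix.map_apply, Pi.smul_apply,
          smul_eq_mul, hwd]
        exact_mod_cast h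
      have heigval : Module.End.HasEigenvalue (Matrix.toLin' (p.map Complex.ofReal))
          ((hNh.eigenvalues j : ℝ) : ℂ) := by
        apply Module.End.hasEigenvalue_of_hasEigenvector
        refine ⟨Module.End.mem_eigenspace_iff.2 ?_, hw0⟩
        rw [Matrix.toLin'_apply, hweig]
      obtain ⟨r, hr1, hr2⟩ := hcomplex _ heigval
      have : hNh.eigenvalues j = r := by exact_mod_cast hr1
      linarith
    -- N is PSD
    have hNspec : N = (hNh.eigenvectorUnitary : Matrix S S ℝ)
        * Matrix.diagonal hNh.eigenvalues
        * star (hNh.eigenvectorUnitary : Matrix S S ℝ) := by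
      simpa [Function.comp] using hNh.spectral_theorem
    have hdiagP : (Matrix.diagonal hNh.eigenvalues).PosSemidef :=
      Matrix.PosSemidef.diagonal (by
        rw [Pi.le_def]
        intro j
        exact hNeig j)
    have hNP : N.PosSemidef := by
      rw [hNspec]
      have := hdiagP.mul_mul_conjTranspose_same (hNh.eigenvectorUnitary : Matrix S S ℝ)
      simpa [Matrix.star_eq_conjTranspose] using this
    -- M = Eᴴ N E
    set E : Matrix S S ℝ := Matrix.diagonal (fun a => if a ∈ U then (0:ℝ) else 1) with hEd
    have hE : Eᴴ = E := by
      rw [hEd, Matrix.diagonal_conjTranspose]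
      congr 1
    have hMENE : M = Eᴴ * N * E := by
      rw [hE]
      ext a b
      rw [show (E * N * E) a b = ((E * N) * E) a b from rfl, Matrix.mul_diagonal,
        Matrix.diagonal_mul]
      rw [hM, hN, hq]
      simp only [Matrix.of_apply]
      by_cases ha : a ∈ U <;> by_cases hb : b ∈ U <;>
        simp [ha, hb]
    have hMP : M.PosSemidef := by
      rw [hMENE]
      exact hNP.conjTranspose_mul_mul_same E
    have hMeig0 : ∀ i : S, 0 ≤ hMh.eigenvalues i := fun i => hMP.eigenvalues_nonneg i
    refine ⟨fun i => (Uu x (e.symm i)) ^ 2, fun i => hMh.eigenvalues (e.symm i),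
      fun i => sq_nonneg _, fun i => ?_, fun t => ?_⟩
    · exact Set.mem_Icc.2 ⟨hMeig0 _, (abs_le.1 (heigbound (e.symm i))).2⟩
    · rw [havoid t, herm_pow_apply M hMh x t]
      exact (Fintype.sum_equiv e.symm _ _ fun i => rfl).symm
end

section
/- For any integer n ≥ 2 and any integer t ≥ 2n, there exists a Markov chain with a state space S of size n and two states x, y ∈ S such that P_x(τ(y) = t) ≥ n/(8t). -/
open Finset

noncomputable def chainP (n : ℕ) (β : ℝ) : Matrix (Fin n) (Fin n) ℝ := fun a b =>
  if (a:ℕ) = n-1 then (if (b:ℕ) = n-1 then 1 else 0)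
  else if (a:ℕ) = n-2 then (if (b:ℕ) = n-1 then β else if (b:ℕ) = 0 then 1-β else 0)
  else if (b:ℕ) = (a:ℕ)+1 then 1 else 0

lemma chain_sum_ite_val (n c : ℕ) (hc : c < n) (v : ℝ) :
    ∑ b : Fin n, (if (b:ℕ) = c then v else 0) = v := by
  rw [Finset.sum_eq_single (⟨c, hc⟩ : Fin n)]
  · simp
  · intro b _ hb
    rw [if_neg]
    intro h; exact hb (Fin.ext h)
  · intro h; exact absurd (Finset.mem_univ _) h

lemma chainP_nonneg (n : ℕ) (β : ℝ) (hβ0 : 0 ≤ β) (hβ1 : β ≤ 1) (a b : Fin n) :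
    0 ≤ chainP n β a b := by
  unfold chainP; split_ifs <;> linarith

lemma chainP_stochastic (n : ℕ) (hn : 2 ≤ n) (β : ℝ) (hβ0 : 0 ≤ β) (hβ1 : β ≤ 1) :
    IsStochastic (chainP n β) where
  left := chainP_nonneg n β hβ0 hβ1
  right := by
    intro a
    have ha := a.isLt
    unfold chainP
    by_cases h1 : (a:ℕ) = n-1
    · simp only [if_pos h1]
      exact chain_sum_ite_val n (n-1) (by omega) 1
    · by_cases h2 : (a:ℕ) = n-2
      · simp only [if_neg h1, if_pos h2]
        have hsplit : ∀ b : Fin n, (if (b:ℕ) = n-1 then β else if (b:ℕ) = 0 then 1-β else 0)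
            = (if (b:ℕ) = n-1 then β else 0) + (if (b:ℕ) = 0 then 1-β else 0) := by
          intro b
          by_cases hb1 : (b:ℕ) = n-1
          · rw [if_pos hb1, if_pos hb1, if_neg (by omega), add_zero]
          · rw [if_neg hb1, if_neg hb1, zero_add]
        rw [Finset.sum_congr rfl (fun b _ => hsplit b), Finset.sum_add_distrib,
          chain_sum_ite_val n (n-1) (by omega) β, chain_sum_ite_val n 0 (by omega) (1-β)]
        ring
      · simp only [if_neg h1, if_neg h2]
        exact chain_sum_ite_val n ((a:ℕ)+1) (by omega) 1

def chainTraj (n t x0 : ℕ) (hn : 2 ≤ n) (s : ℕ) : Fin n :=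
  if s = t then ⟨n-1, by omega⟩
  else ⟨(x0+s) % (n-1), by have h := Nat.mod_lt (x0+s) (y := n-1) (by omega); omega⟩


/-- Claim 15: for `n ≥ 2` and `t ≥ 2n` there is a Markov chain on `n` states and
states `x, y` with `P_x(τ(y) = t) ≥ n/(8t)`. -/
theorem exists_chain_large_hitProbEq (n t : ℕ) (hn : 2 ≤ n) (ht : 2 * n ≤ t) :
    ∃ p : Matrix (Fin n) (Fin n) ℝ, IsStochastic p ∧
      ∃ x y : Fin n, (n : ℝ) / (8 * t) ≤ hitProbEq p x y t := by
  classical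
  set m := n - 1 with hm
  have hm0 : 0 < m := by omega
  have ht1 : 1 ≤ t := by omega
  set j0 := (t-1) / m with hj0
  set r := (t-1) % m with hrdef
  have hrm : r < m := Nat.mod_lt _ hm0
  have hkey : m * j0 + r = t - 1 := Nat.div_add_mod _ _
  have hj1 : 1 ≤ j0 := (Nat.one_le_div_iff hm0).mpr (by omega)
  set β : ℝ := 1 / (j0+1) with hβdef
  have hj0R : (1:ℝ) ≤ (j0:ℝ) := by exact_mod_cast hj1
  have hβ0 : 0 < β := by positivity
  have hβ1 : β ≤ 1 := by
    rw [hβdef, div_le_one (by positivity)]; linarith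
  set x0 := m - 1 - r with hx0
  -- cycle position
  set c : ℕ → ℕ := fun s => (x0 + s) % m with hcdef
  have hclt : ∀ s, c s < m := fun s => Nat.mod_lt _ hm0
  have hc : ∀ s : ℕ, c s = (x0 + s % m) % m := by
    intro s
    show (x0 + s) % m = _
    rw [Nat.add_mod x0 s m, Nat.add_mod x0 (s % m) m, Nat.mod_mod_of_dvd s (dvd_refl m)]
  have hcr : ∀ s, s % m = r → c s = m - 1 := by
    intro s h
    rw [hc s, h]
    have h2 : x0 + r = m - 1 := by omega
    rw [h2, Nat.mod_eq_of_lt (by omega)]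
  have hcnr : ∀ s, s % m ≠ r → c s < m - 1 := by
    intro s h
    have hsm : s % m < m := Nat.mod_lt _ hm0
    rw [hc s]
    rcases lt_or_gt_of_ne h with h' | h'
    · rw [Nat.mod_eq_of_lt (by omega)]; omega
    · have h2 : x0 + s % m = m + (s % m - r - 1) := by omega
      rw [h2, Nat.add_mod_left, Nat.mod_eq_of_lt (by omega)]
      omega
  have hcsucc : ∀ s, c (s+1) = (c s + 1) % m := by
    intro s
    show (x0 + (s+1)) % m = ((x0+s) % m + 1) % m
    rw [Nat.mod_add_mod, ← add_assoc]
  -- the chainTrajectory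
  set Z : Fin (t+1) → Fin n := fun s => chainTraj n t x0 hn s.val with hZ
  refine ⟨chainP n β, chainP_stochastic n hn β hβ0.le hβ1, chainTraj n t x0 hn 0, chainTraj n t x0 hn t, ?_⟩
  -- step weights
  set g : ℕ → ℝ := fun i => chainP n β (chainTraj n t x0 hn i) (chainTraj n t x0 hn (i+1)) with hg
  have hchainTraj_lt : ∀ s, s ≠ t → chainTraj n t x0 hn s = ⟨c s, by have := hclt s; omega⟩ := by
    intro s hs
    rw [chainTraj, if_neg hs]
  have hchainTraj_t : chainTraj n t x0 hn t = ⟨n-1, by omega⟩ := by rw [chainTraj, if_pos rfl]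
  have hg1 : ∀ i, i < t → i % m ≠ r → g i = 1 := by
    intro i hi hir
    have hci : c i < m - 1 := hcnr i hir
    have hi1 : i + 1 ≠ t := by
      intro h
      apply hir
      rw [show i = t - 1 by omega]
    rw [hg]
    show chainP n β _ _ = 1
    rw [hchainTraj_lt i (by omega), hchainTraj_lt (i+1) hi1, chainP]
    have hci1 : c (i+1) = c i + 1 := by
      rw [hcsucc i, Nat.mod_eq_of_lt (by omega)]
    simp only
    rw [if_neg (by show c i ≠ n - 1; omega), if_neg (by show c i ≠ n - 2; omega),
      if_pos (by show c (i+1) = c i + 1; exact hci1)]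
  have hg2 : ∀ i, i < t - 1 → i % m = r → g i = 1 - β := by
    intro i hi hir
    have hci : c i = m - 1 := hcr i hir
    have hci1 : c (i+1) = 0 := by
      rw [hcsucc i, hci]
      have : m - 1 + 1 = m := by omega
      rw [this, Nat.mod_self]
    rw [hg]
    show chainP n β _ _ = 1 - β
    rw [hchainTraj_lt i (by omega), hchainTraj_lt (i+1) (by omega), chainP]
    simp only
    rw [if_neg (by show c i ≠ n - 1; omega), if_pos (by show c i = n - 2; omega),
      if_neg (by show c (i+1) ≠ n - 1; omega), if_pos (by show c (i+1) = 0; exact hci1)]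
  have hg3 : g (t-1) = β := by
    have hci : c (t-1) = m - 1 := hcr _ (by omega)
    rw [hg]
    show chainP n β _ _ = β
    have h1 : t - 1 + 1 = t := by omega
    rw [hchainTraj_lt (t-1) (by omega), h1, hchainTraj_t, chainP]
    simp only
    rw [if_neg (by show c (t-1) ≠ n - 1; omega), if_pos (by show c (t-1) = n - 2; omega)]
    simp
  -- the set of exit-state visits
  have hE : (range t).filter (fun i => i % m = r)
      = (range (j0+1)).image (fun j => r + j*m) := by
    ext i
    simp only [mem_filter, mem_range, mem_image]
    constructor
    · rintro ⟨h1, h2⟩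
      refine ⟨i / m, ?_, ?_⟩
      · have hdd : i / m ≤ (t-1) / m := Nat.div_le_div_right (by omega)
        omega
      · rw [← h2, Nat.mul_comm]
        exact Nat.mod_add_div i m
    · rintro ⟨j, hj, rfl⟩
      have hjm : m * j ≤ m * j0 := Nat.mul_le_mul_left m (by omega)
      have hcm : j * m = m * j := Nat.mul_comm j m
      constructor
      · omega
      · rw [Nat.add_mul_mod_self_right, Nat.mod_eq_of_lt hrm]
  have hinj : Function.Injective (fun j => r + j*m) := by
    intro a b h
    simp only at h
    have : a * m = b * m := by omega
    exact Nat.eq_of_mul_eq_mul_right hm0 this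
  have hcard : ((range t).filter (fun i => i % m = r)).card = j0 + 1 := by
    rw [hE, Finset.card_image_of_injective _ hinj, card_range]
  have hmemE : t - 1 ∈ (range t).filter (fun i => i % m = r) := by
    rw [mem_filter, mem_range]
    exact ⟨by omega, by omega⟩
  -- the product
  have hprod : ∏ i ∈ range t, g i = β * (1-β)^j0 := by
    rw [← Finset.prod_filter_mul_prod_filter_not (range t) (fun i => i % m = r) g]
    have h2 : ∏ i ∈ (range t).filter (fun i => ¬ i % m = r), g i = 1 := by
      apply Finset.prod_eq_one
      intro i hi
      rw [mem_filter, mem_range] at hi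
      exact hg1 i hi.1 hi.2
    rw [h2, mul_one, ← Finset.insert_erase hmemE,
      Finset.prod_insert (Finset.notMem_erase _ _), hg3]
    congr 1
    have h3 : ∀ i ∈ ((range t).filter (fun i => i % m = r)).erase (t-1), g i = 1 - β := by
      intro i hi
      rw [Finset.mem_erase, mem_filter, mem_range] at hi
      exact hg2 i (by omega) hi.2.2
    rw [Finset.prod_congr rfl h3, Finset.prod_const,
      Finset.card_erase_of_mem hmemE, hcard, Nat.add_sub_cancel]
  -- pathWeight of Z
  have hPW : pathWeight (chainP n β) Z = β * (1-β)^j0 := by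
    rw [pathWeight]
    have : ∀ i : Fin t, chainP n β (Z i.castSucc) (Z i.succ) = g i.val := by
      intro i
      rfl
    rw [Finset.prod_congr rfl (fun i _ => this i)]
    rw [Fin.prod_univ_eq_prod_range g t]
    exact hprod
  -- Z satisfies the event
  have hZ0 : Z 0 = chainTraj n t x0 hn 0 := rfl
  have hZlast : Z (Fin.last t) = chainTraj n t x0 hn t := by
    rw [hZ]; simp [Fin.val_last]
  have hZne : ∀ i : Fin (t+1), (i:ℕ) < t → Z i ≠ chainTraj n t x0 hn t := by
    intro i hi
    rw [hZ]
    simp only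
    rw [hchainTraj_lt i.val (by omega), hchainTraj_t]
    intro h
    have h2 : c i.val = n - 1 := congrArg Fin.val h
    have := hclt i.val
    omega
  -- lower bound the sum by the single term at Z
  have hterm : ∀ w : Fin (t+1) → Fin n,
      0 ≤ (if w 0 = chainTraj n t x0 hn 0 ∧ (w (Fin.last t) = chainTraj n t x0 hn t ∧
        ∀ i : Fin (t + 1), (i : ℕ) < t → w i ≠ chainTraj n t x0 hn t)
        then pathWeight (chainP n β) w else 0) := by
    intro w
    split_ifs
    · exact Finset.prod_nonneg (fun i _ => chainP_nonneg n β hβ0.le hβ1 _ _)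
    · exact le_refl 0
  -- numeric bound
  have hApos : (0:ℝ) < (1 + 1/(j0:ℝ))^j0 := by positivity
  have hA : (1 + 1/(j0:ℝ))^j0 ≤ 4 := by
    have h1 : (1 : ℝ) + 1/(j0:ℝ) ≤ Real.exp (1/(j0:ℝ)) := by
      have := Real.add_one_le_exp (1/(j0:ℝ)); linarith
    have h2 : (1 + 1/(j0:ℝ))^j0 ≤ (Real.exp (1/(j0:ℝ)))^j0 :=
      pow_le_pow_left₀ (by positivity) h1 j0
    have h3 : (Real.exp (1/(j0:ℝ)))^j0 = Real.exp ((j0:ℝ) * (1/(j0:ℝ))) :=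
      (Real.exp_nat_mul _ j0).symm
    have h4 : (j0:ℝ) * (1/(j0:ℝ)) = 1 := by
      field_simp
    have h5 : Real.exp 1 < 2.7182818286 := Real.exp_one_lt_d9
    calc (1 + 1/(j0:ℝ))^j0 ≤ (Real.exp (1/(j0:ℝ)))^j0 := h2
      _ = Real.exp 1 := by rw [h3, h4]
      _ ≤ 4 := by linarith
  have hq : (1:ℝ)/4 ≤ (1-β)^j0 := by
    have hj : (j0:ℝ) ≠ 0 := by linarith
    have hβval : 1 - β = 1 / (1 + 1/(j0:ℝ)) := by
      rw [hβdef]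
      field_simp
      ring
    rw [hβval, div_pow, one_pow]
    exact one_div_le_one_div_of_le hApos hA
  have hnatZ : (n:ℤ) * (j0+1) ≤ 2*t := by
    have h0 : m * j0 ≤ t - 1 := by omega
    have h1 : ((n:ℤ)-1) * (j0:ℤ) ≤ (t:ℤ) - 1 := by
      have h2 : ((m:ℕ):ℤ) * ((j0:ℕ):ℤ) ≤ (((t-1:ℕ)):ℤ) := by exact_mod_cast h0
      have h3 : ((m:ℕ):ℤ) = (n:ℤ) - 1 := by
        rw [hm]; push_cast [Nat.cast_sub (by omega : 1 ≤ n)]; ring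
      have h4 : (((t-1:ℕ)):ℤ) = (t:ℤ) - 1 := by
        push_cast [Nat.cast_sub ht1]; ring
      rw [h3, h4] at h2; exact h2
    have h5 : ((n:ℤ) - 2) * ((j0:ℤ) - 1) ≥ 0 := by
      apply mul_nonneg
      · have : (2:ℤ) ≤ (n:ℤ) := by exact_mod_cast hn
        linarith
      · have : (1:ℤ) ≤ (j0:ℤ) := by exact_mod_cast hj1
        linarith
    have h6 : (2:ℤ) * (n:ℤ) ≤ (t:ℤ) := by exact_mod_cast ht
    nlinarith [h1, h5]
  have hnat : (n:ℝ) * ((j0:ℝ)+1) ≤ 2*(t:ℝ) := by exact_mod_cast hnatZ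
  have ht0R : (0:ℝ) < t := by
    have : 0 < t := by omega
    exact_mod_cast this
  have hfinal : (n : ℝ) / (8 * t) ≤ β * (1-β)^j0 := by
    have step1 : (n : ℝ) / (8 * t) ≤ 1/(4*((j0:ℝ)+1)) := by
      rw [div_le_div_iff₀ (by positivity) (by positivity)]
      nlinarith [hnat]
    have step2 : (1:ℝ)/(4*((j0:ℝ)+1)) = β * (1/4) := by
      rw [hβdef]; field_simp
    have step3 : β * (1/4) ≤ β * (1-β)^j0 :=
      mul_le_mul_of_nonneg_left hq hβ0.le
    linarith
  -- assemble
  have hZ0' : Z 0 = chainTraj n t x0 hn 0 := by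
    show chainTraj n t x0 hn ((0 : Fin (t+1)).val) = _
    rw [Fin.val_zero]
  have hPWnn : ∀ w : Fin (t+1) → Fin n, 0 ≤ pathWeight (chainP n β) w := fun w =>
    Finset.prod_nonneg (fun i _ => chainP_nonneg n β hβ0.le hβ1 _ _)
  rw [hitProbEq, eventProb]
  refine le_trans ?_ (Finset.single_le_sum (fun w _ => ?_) (Finset.mem_univ Z))
  · rw [if_pos ⟨hZ0', hZlast, hZne⟩, hPW]
    exact hfinal
  · split
    · exact hPWnn w
    · exact le_refl 0
end

section
/- Let X be a Markov chain with finite state space S, let x, y ∈ S, and let U ⊆ S be a subset such that, started from x, the chain almost surely cannot reach U without first visiting y (i.e., P_x(τ(U) < τ(y)) = 0). For s ≥ 0 let Z_s denote the number of states of U visited by the chain during times 0, 1, …, s. Then for any integers t > 0 and N > 0, there exists an integer s with t ≤ s < t + 2N such that P_x(S_s) ≥ P_x(t ≤ τ(y) < t + N) · E_y[Z_N] / (2N), where E_y denotes expectation for the chain started at y. -/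
open Finset

/-- `P_x(S_t)`: the probability that the state visited at time `t` was not visited
at any earlier time. -/
noncomputable def surpriseProb {S : Type*} [Fintype S] (p : Matrix S S ℝ) (x : S) (t : ℕ) : ℝ :=
  eventProb p x t fun z => ∀ i : Fin (t + 1), (i : ℕ) < t → z i ≠ z (Fin.last t)

section Helpers
open scoped Classical
variable {S : Type*} [Fintype S] [DecidableEq S] {p : Matrix S S ℝ} {m : ℕ}

lemma pathWeight_nonneg (hp : IsStochastic p) {m : ℕ} (z : Fin (m+1) → S) :
    0 ≤ pathWeight p z :=
  Finset.prod_nonneg fun _ _ => hp.1 _ _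

lemma eventProb_nonneg (hp : IsStochastic p) (x : S) (m : ℕ) (A : (Fin (m+1) → S) → Prop) :
    0 ≤ eventProb p x m A := by
  refine Finset.sum_nonneg fun z _ => ?_
  split_ifs
  · exact pathWeight_nonneg hp z
  · exact le_refl 0

lemma eventProb_congr {x : S} {m : ℕ} {A B : (Fin (m+1) → S) → Prop}
    (h : ∀ z, A z ↔ B z) : eventProb p x m A = eventProb p x m B := by
  unfold eventProb
  exact Finset.sum_congr rfl fun z _ => by
    by_cases hz : z 0 = x ∧ A z
    · rw [if_pos hz, if_pos ⟨hz.1, (h z).1 hz.2⟩]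
    · rw [if_neg hz, if_neg (fun hc => hz ⟨hc.1, (h z).2 hc.2⟩)]

lemma eventProb_mono (hp : IsStochastic p) {x : S} {m : ℕ} {A B : (Fin (m+1) → S) → Prop}
    (h : ∀ z, A z → B z) : eventProb p x m A ≤ eventProb p x m B := by
  unfold eventProb
  refine Finset.sum_le_sum fun z _ => ?_
  by_cases hz : z 0 = x ∧ A z
  · rw [if_pos hz, if_pos ⟨hz.1, h z hz.2⟩]
  · rw [if_neg hz]
    split_ifs
    · exact pathWeight_nonneg hp z
    · exact le_refl 0

lemma eventProb_le_sum (hp : IsStochastic p) {x : S} {m : ℕ} {ι : Type*} {F : Finset ι}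
    {A : (Fin (m+1) → S) → Prop} {B : ι → (Fin (m+1) → S) → Prop}
    (h : ∀ z, A z → ∃ j ∈ F, B j z) :
    eventProb p x m A ≤ ∑ j ∈ F, eventProb p x m (B j) := by
  classical
  unfold eventProb
  rw [Finset.sum_comm]
  refine Finset.sum_le_sum fun z _ => ?_
  by_cases hz : z 0 = x ∧ A z
  · obtain ⟨j, hjF, hj⟩ := h z hz.2
    rw [if_pos hz]
    refine le_trans ?_ (Finset.single_le_sum (fun i _ => ?_) hjF)
    · rw [if_pos ⟨hz.1, hj⟩]
    · split_ifs
      · exact pathWeight_nonneg hp z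
      · exact le_refl 0
  · rw [if_neg hz]
    refine Finset.sum_nonneg fun i _ => ?_
    split_ifs
    · exact pathWeight_nonneg hp z
    · exact le_refl 0

lemma eventProb_sum_le (hp : IsStochastic p) {x : S} {m : ℕ} {ι : Type*} {F : Finset ι}
    {A : (Fin (m+1) → S) → Prop} {B : ι → (Fin (m+1) → S) → Prop}
    (h1 : ∀ j ∈ F, ∀ z, B j z → A z)
    (h2 : ∀ z, ∀ j ∈ F, ∀ j' ∈ F, B j z → B j' z → j = j') :
    ∑ j ∈ F, eventProb p x m (B j) ≤ eventProb p x m A := by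
  classical
  unfold eventProb
  rw [Finset.sum_comm]
  refine Finset.sum_le_sum fun z _ => ?_
  by_cases hz : ∃ j ∈ F, z 0 = x ∧ B j z
  · obtain ⟨j0, hj0F, hj0⟩ := hz
    rw [Finset.sum_eq_single_of_mem j0 hj0F]
    · rw [if_pos hj0, if_pos ⟨hj0.1, h1 j0 hj0F z hj0.2⟩]
    · intro j hjF hne
      rw [if_neg]
      rintro ⟨-, hB⟩
      exact hne (h2 z j hjF j0 hj0F hB hj0.2)
  · push_neg at hz
    refine le_trans (le_of_eq (Finset.sum_eq_zero fun j hj => ?_)) ?_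
    · rw [if_neg]
      rintro ⟨h0, hB⟩
      exact hz j hj h0 hB
    · split_ifs
      · exact pathWeight_nonneg hp z
      · exact le_refl 0

lemma eventProb_le_add (hp : IsStochastic p) {x : S} {m : ℕ}
    {A B C : (Fin (m+1) → S) → Prop} (h : ∀ z, A z → B z ∨ C z) :
    eventProb p x m A ≤ eventProb p x m B + eventProb p x m C := by
  classical
  unfold eventProb
  rw [← Finset.sum_add_distrib]
  refine Finset.sum_le_sum fun z _ => ?_
  by_cases hz : z 0 = x ∧ A z
  · rw [if_pos hz]
    rcases h z hz.2 with hb | hc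
    · rw [if_pos ⟨hz.1, hb⟩]
      refine le_add_of_nonneg_right ?_
      split_ifs
      · exact pathWeight_nonneg hp z
      · exact le_refl 0
    · rw [if_pos (show z 0 = x ∧ C z from ⟨hz.1, hc⟩)]
      refine le_add_of_nonneg_left ?_
      split_ifs
      · exact pathWeight_nonneg hp z
      · exact le_refl 0
  · rw [if_neg hz]
    have := pathWeight_nonneg hp z
    split_ifs <;> linarith

lemma pathWeight_snoc (u : Fin (m+1) → S) (s : S) :
    pathWeight p (Fin.snoc u s) = pathWeight p u * p (u (Fin.last m)) s := by
  unfold pathWeight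
  rw [Fin.prod_univ_castSucc]
  congr 1
  · refine Finset.prod_congr rfl fun i _ => ?_
    rw [Fin.succ_castSucc, Fin.snoc_castSucc, Fin.snoc_castSucc]
  · rw [Fin.succ_last, Fin.snoc_castSucc, Fin.snoc_last]

lemma eventProb_succ (hp : IsStochastic p) (x : S) (m : ℕ) (A : (Fin (m+1) → S) → Prop) :
    eventProb p x (m+1) (fun z => A (fun i => z i.castSucc)) = eventProb p x m A := by
  classical
  unfold eventProb
  rw [← Equiv.sum_comp (Fin.snocEquiv (fun _ => S))]
  rw [Fintype.sum_prod_type, Finset.sum_comm]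
  simp only [Fin.snocEquiv, Equiv.coe_fn_mk]
  refine Finset.sum_congr rfl fun u _ => ?_
  have e0 : ∀ s : S, (Fin.snoc u s : Fin (m+1+1) → S) 0 = u 0 := fun s => by
    simp [Fin.snoc]
  have h1 : ∀ s : S, (fun i : Fin (m+1) => (Fin.snoc u s : Fin (m+1+1) → S) i.castSucc) = u :=
    fun s => funext fun i => by rw [Fin.snoc_castSucc]
  by_cases hc : u 0 = x ∧ A u
  · rw [if_pos hc]
    have step : ∀ s : S, (if (Fin.snoc u s : Fin (m+1+1) → S) 0 = x ∧
          A (fun i : Fin (m+1) => (Fin.snoc u s : Fin (m+1+1) → S) i.castSucc)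
        then pathWeight p (Fin.snoc u s) else 0)
        = pathWeight p u * p (u (Fin.last m)) s := by
      intro s
      refine (if_pos ?_).trans (pathWeight_snoc u s)
      refine ⟨(e0 s).trans hc.1, ?_⟩
      rw [h1 s]
      exact hc.2
    refine (Finset.sum_congr rfl fun s _ => ?_).trans
      (?_ : ∑ s, pathWeight p u * p (u (Fin.last m)) s = _)
    · exact (if_pos ⟨(e0 s).trans hc.1, cast (congrArg A (h1 s)).symm hc.2⟩).trans
        (pathWeight_snoc u s)
    · rw [← Finset.mul_sum, hp.2, mul_one]
  · rw [if_neg hc]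
    refine Finset.sum_eq_zero fun s _ => if_neg ?_
    rintro ⟨c1, c2⟩
    rw [h1 s] at c2
    exact hc ⟨(e0 s).symm.trans c1, c2⟩

def restrictPath {S : Type*} {a b : ℕ} (h : a ≤ b) (z : Fin (b+1) → S) : Fin (a+1) → S :=
  fun i => z (Fin.castLE (by omega) i)

lemma restrict_eq_self {a : ℕ} (h : a ≤ a) (z : Fin (a+1) → S) : restrictPath h z = z :=
  funext fun i => congrArg z (Fin.ext rfl)

lemma restrict_castSucc {a b : ℕ} (h : a ≤ b+1) (h' : a ≤ b) (z : Fin (b+1+1) → S) :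
    restrictPath h' (fun i => z i.castSucc) = restrictPath h z :=
  funext fun i => congrArg z (Fin.ext rfl)

lemma eventProb_restrict (hp : IsStochastic p) (x : S) {a b : ℕ} (h : a ≤ b)
    (A : (Fin (a+1) → S) → Prop) :
    eventProb p x b (fun z => A (restrictPath h z)) = eventProb p x a A := by
  induction b with
  | zero =>
    have ha : a = 0 := Nat.le_zero.mp h
    subst ha
    exact eventProb_congr fun z => by rw [restrict_eq_self]
  | succ b ih =>
    rcases Nat.lt_or_ge a (b+1) with hlt | hge
    · have h' : a ≤ b := by omega
      calc eventProb p x (b+1) (fun z => A (restrictPath h z))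
          = eventProb p x (b+1)
              (fun z => (fun w => A (restrictPath h' w)) (fun i => z i.castSucc)) :=
            eventProb_congr fun z => by
              show A (restrictPath h z) ↔ A (restrictPath h' fun i => z i.castSucc)
              rw [restrict_castSucc h h']
        _ = eventProb p x b (fun w => A (restrictPath h' w)) :=
            eventProb_succ hp x b (fun w => A (restrictPath h' w))
        _ = eventProb p x a A := ih h'
    · have ha : a = b+1 := by omega
      subst ha
      exact eventProb_congr fun z => by rw [restrict_eq_self]

def suffixPath {S : Type*} (a : ℕ) {b : ℕ} (z : Fin (a+b+1) → S) : Fin (b+1) → S :=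
  fun j => z ⟨a + (j : ℕ), by omega⟩

def gluePath {S : Type*} {a b : ℕ} (u : Fin (a+1) → S) (w : Fin b → S) : Fin (a+b+1) → S :=
  fun i => if h : (i : ℕ) ≤ a then u ⟨i, by omega⟩ else w ⟨(i : ℕ) - (a+1), by omega⟩

variable {a b : ℕ}

lemma gluePath_le (u : Fin (a+1) → S) (w : Fin b → S) (i : Fin (a+b+1)) (h : (i : ℕ) ≤ a) :
    gluePath u w i = u ⟨i, by omega⟩ := dif_pos h

lemma gluePath_gt (u : Fin (a+1) → S) (w : Fin b → S) (i : Fin (a+b+1)) (h : a < (i : ℕ)) :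
    gluePath u w i = w ⟨(i : ℕ) - (a+1), by omega⟩ := dif_neg (by omega)

lemma restrict_gluePath (u : Fin (a+1) → S) (w : Fin b → S) :
    restrictPath (Nat.le_add_right a b) (gluePath u w) = u := by
  funext i
  rw [restrictPath, gluePath_le u w _ (by simp [Fin.castLE]; omega)]
  exact congrArg u (Fin.ext rfl)

lemma suffix_gluePath (u : Fin (a+1) → S) (w : Fin b → S) :
    suffixPath a (gluePath u w) = Fin.cons (u (Fin.last a)) w := by
  funext j
  refine Fin.cases ?_ (fun j => ?_) j
  · rw [Fin.cons_zero, suffixPath, gluePath_le u w _ (by simp)]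
    exact congrArg u (Fin.ext (by simp))
  · rw [Fin.cons_succ, suffixPath, gluePath_gt u w _ (by simp)]
    exact congrArg w (Fin.ext (by first | (simp; omega) | simp))

lemma gluePath_bijective :
    Function.Bijective (fun uw : (Fin (a+1) → S) × (Fin b → S) => gluePath uw.1 uw.2) := by
  rw [Function.bijective_iff_has_inverse]
  refine ⟨fun z => (restrictPath (Nat.le_add_right a b) z,
    fun j : Fin b => z ⟨a + 1 + (j : ℕ), by omega⟩), fun uw => ?_, fun z => ?_⟩
  · obtain ⟨u, w⟩ := uw
    refine Prod.ext (restrict_gluePath u w) ?_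
    funext j
    show gluePath u w ⟨a + 1 + (j : ℕ), by omega⟩ = w j
    rw [gluePath_gt u w _ (by first | (simp; omega) | simp)]
    exact congrArg w (Fin.ext (by first | (simp; omega) | simp))
  · funext i
    show gluePath _ _ i = z i
    by_cases h : (i : ℕ) ≤ a
    · rw [gluePath_le _ _ _ h]
      exact congrArg z (Fin.ext rfl)
    · rw [gluePath_gt _ _ _ (by omega)]
      exact congrArg z (Fin.ext (by first | (simp; omega) | simp))

lemma gluePath_zero (u : Fin (a+1) → S) (w : Fin b → S) :
    gluePath u w 0 = u 0 := by
  rw [gluePath_le u w _ (by simp)]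
  exact congrArg u (Fin.ext rfl)

lemma pathWeight_gluePath (u : Fin (a+1) → S) (w : Fin b → S) :
    pathWeight p (gluePath u w)
      = pathWeight p u * pathWeight p (Fin.cons (u (Fin.last a)) w) := by
  rw [← suffix_gluePath u w]
  have h1 : ∀ i : Fin a, gluePath u w (Fin.castAdd b i).castSucc = u i.castSucc := fun i => by
    rw [gluePath_le u w _ (by simp)]
    exact congrArg u (Fin.ext rfl)
  have h2 : ∀ i : Fin a, gluePath u w (Fin.castAdd b i).succ = u i.succ := fun i => by
    rw [gluePath_le u w _ (by simp [Nat.succ_le_iff])]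
    exact congrArg u (Fin.ext rfl)
  have h3 : ∀ i : Fin b, gluePath u w (Fin.natAdd a i).castSucc
      = suffixPath a (gluePath u w) i.castSucc := fun i =>
    congrArg (gluePath u w) (Fin.ext (by simp [suffixPath]))
  have h4 : ∀ i : Fin b, gluePath u w (Fin.natAdd a i).succ
      = suffixPath a (gluePath u w) i.succ := fun i =>
    congrArg (gluePath u w) (Fin.ext (by simp [suffixPath]; omega))
  show (∏ i : Fin (a+b), p (gluePath u w i.castSucc) (gluePath u w i.succ)) = _
  rw [Fin.prod_univ_add (f := fun i : Fin (a+b) =>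
    p (gluePath u w i.castSucc) (gluePath u w i.succ))]
  refine congrArg₂ (· * ·) ?_ ?_
  · exact Finset.prod_congr rfl fun i _ => by rw [h1 i, h2 i]
  · exact Finset.prod_congr rfl fun i _ => by rw [h3 i, h4 i]

lemma eventProb_cons (hp : IsStochastic p) (y : S) (B : (Fin (b+1) → S) → Prop) :
    eventProb p y b B
      = ∑ w : Fin b → S, (if B (Fin.cons y w) then pathWeight p (Fin.cons y w) else 0) := by
  classical
  unfold eventProb
  rw [← Equiv.sum_comp (Fin.consEquiv (fun _ => S)), Fintype.sum_prod_type]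
  simp only [Fin.consEquiv, Equiv.coe_fn_mk]
  rw [Finset.sum_eq_single y]
  · refine Finset.sum_congr rfl fun w _ => ?_
    by_cases hB : B (Fin.cons y w)
    · rw [if_pos hB]; exact if_pos ⟨by simp, hB⟩
    · rw [if_neg hB]; exact if_neg (fun hc => hB hc.2)
  · intro c _ hne
    refine Finset.sum_eq_zero fun w _ => if_neg ?_
    rintro ⟨h0, -⟩
    rw [Fin.cons_zero] at h0
    exact hne h0
  · intro hy
    exact absurd (Finset.mem_univ y) hy

lemma eventProb_mul (hp : IsStochastic p) (x y : S) (a b : ℕ)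
    (A : (Fin (a+1) → S) → Prop) (B : (Fin (b+1) → S) → Prop) :
    eventProb p x a (fun u => A u ∧ u (Fin.last a) = y) * eventProb p y b B
      = eventProb p x (a+b) (fun z =>
          (A (restrictPath (Nat.le_add_right a b) z)
            ∧ restrictPath (Nat.le_add_right a b) z (Fin.last a) = y)
          ∧ B (suffixPath a z)) := by
  classical
  rw [eventProb_cons hp y B]
  unfold eventProb
  rw [Finset.sum_mul, ← Function.Bijective.sum_comp gluePath_bijective, Fintype.sum_prod_type]
  refine Finset.sum_congr rfl fun u _ => ?_
  by_cases hc : u 0 = x ∧ A u ∧ u (Fin.last a) = y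
  · rw [if_pos (show u 0 = x ∧ (fun u => A u ∧ u (Fin.last a) = y) u from hc),
      Finset.mul_sum]
    refine Finset.sum_congr rfl fun w _ => ?_
    by_cases hBw : B (Fin.cons y w)
    · have hcond : gluePath u w 0 = x ∧
          ((A (restrictPath (Nat.le_add_right a b) (gluePath u w))
            ∧ restrictPath (Nat.le_add_right a b) (gluePath u w) (Fin.last a) = y)
          ∧ B (suffixPath a (gluePath u w))) := by
        refine ⟨(gluePath_zero u w).trans hc.1, ⟨?_, ?_⟩, ?_⟩
        · rw [restrict_gluePath]; exact hc.2.1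
        · rw [restrict_gluePath]; exact hc.2.2
        · rw [suffix_gluePath, hc.2.2]; exact hBw
      rw [if_pos hBw, if_pos hcond, pathWeight_gluePath u w, hc.2.2]
    · have hncond : ¬(gluePath u w 0 = x ∧
          ((A (restrictPath (Nat.le_add_right a b) (gluePath u w))
            ∧ restrictPath (Nat.le_add_right a b) (gluePath u w) (Fin.last a) = y)
          ∧ B (suffixPath a (gluePath u w)))) := by
        rintro ⟨-, -, hBs⟩
        rw [suffix_gluePath, hc.2.2] at hBs
        exact hBw hBs
      rw [if_neg hBw, mul_zero, if_neg hncond]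
  · rw [if_neg (show ¬(u 0 = x ∧ (fun u => A u ∧ u (Fin.last a) = y) u) from hc), zero_mul]
    refine (Finset.sum_eq_zero fun w _ => ?_).symm
    have hncond : ¬(gluePath u w 0 = x ∧
        ((A (restrictPath (Nat.le_add_right a b) (gluePath u w))
          ∧ restrictPath (Nat.le_add_right a b) (gluePath u w) (Fin.last a) = y)
        ∧ B (suffixPath a (gluePath u w)))) := by
      rintro ⟨h0, ⟨hA, hl⟩, -⟩
      rw [restrict_gluePath] at hA hl
      exact hc ⟨(gluePath_zero u w).symm.trans h0, hA, hl⟩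
    exact if_neg hncond

lemma claim_E (y : S) (U : Finset S) (N : ℕ) :
    (∑ z : Fin (N + 1) → S, (if z 0 = y then pathWeight p z else 0) *
      ((U.filter fun u => ∃ r : Fin (N + 1), z r = u).card : ℝ))
    = ∑ u ∈ U, eventProb p y N (fun v => ∃ r : Fin (N+1), v r = u) := by
  classical
  unfold eventProb
  rw [Finset.sum_comm]
  refine Finset.sum_congr rfl fun z _ => ?_
  rw [Finset.card_filter]
  push_cast
  rw [Finset.mul_sum]
  refine Finset.sum_congr rfl fun u hu => ?_
  by_cases h0 : z 0 = y
  · by_cases hr : ∃ r : Fin (N+1), z r = u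
    · rw [if_pos h0, if_pos hr, if_pos ⟨h0, hr⟩, mul_one]
    · rw [if_neg hr,
        if_neg (show ¬(z 0 = y ∧ ∃ r : Fin (N+1), z r = u) from fun hc => hr hc.2), mul_zero]
  · rw [if_neg h0,
      if_neg (show ¬(z 0 = y ∧ ∃ r : Fin (N+1), z r = u) from fun hc => h0 hc.1), zero_mul]

lemma claim_hit_split (hp : IsStochastic p) (x y : S) (t0 N : ℕ) :
    eventProb p x (t0+N)
      (fun z => (∀ i : Fin (t0+N+1), (i:ℕ) < t0+1 → z i ≠ y)
        ∧ ∃ i : Fin (t0+N+1), t0+1 ≤ (i:ℕ) ∧ z i = y)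
    = ∑ k ∈ Finset.Icc (t0+1) (t0+N), eventProb p x (t0+N)
        (fun z => (∀ i : Fin (t0+N+1), (i:ℕ) < k → z i ≠ y)
          ∧ ∃ i : Fin (t0+N+1), (i:ℕ) = k ∧ z i = y) := by
  classical
  refine le_antisymm ?_ ?_
  · refine eventProb_le_sum hp fun z hz => ?_
    obtain ⟨hbef, i0, hi0t, hi0⟩ := hz
    have hQ : ∃ n, ∃ hn : n < t0 + N + 1, z ⟨n, hn⟩ = y :=
      ⟨(i0 : ℕ), i0.isLt, by rwa [Fin.eta]⟩
    set k := Nat.find hQ with hk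
    obtain ⟨hklt, hzk⟩ := Nat.find_spec hQ
    have hmin : ∀ n < k, ¬∃ hn : n < t0 + N + 1, z ⟨n, hn⟩ = y := fun n hn => Nat.find_min hQ hn
    have hkt : t0 + 1 ≤ k := by
      by_contra hc
      exact hbef ⟨k, hklt⟩ (by simp only [Fin.val_mk]; omega) hzk
    have hkle : k ≤ (i0 : ℕ) := by
      by_contra hc
      exact hmin (i0 : ℕ) (by omega) ⟨i0.isLt, by rwa [Fin.eta]⟩
    refine ⟨k, Finset.mem_Icc.mpr ⟨hkt, by omega⟩, ?_, ⟨⟨k, hklt⟩, rfl, hzk⟩⟩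
    intro i hik hiy
    exact hmin (i : ℕ) hik ⟨i.isLt, by rwa [Fin.eta]⟩
  · refine eventProb_sum_le hp (fun k hk z hz => ?_) (fun z k hk k' hk' hz hz' => ?_)
    · rw [Finset.mem_Icc] at hk
      obtain ⟨hbef, i0, hi0, hzi0⟩ := hz
      exact ⟨fun i hi => hbef i (by omega), i0, by omega, hzi0⟩
    · rw [Finset.mem_Icc] at hk hk'
      obtain ⟨hbef, i0, hi0, hzi0⟩ := hz
      obtain ⟨hbef', i0', hi0', hzi0'⟩ := hz'
      by_contra hne
      rcases Nat.lt_or_ge k k' with h | h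
      · exact hbef' i0 (by omega) hzi0
      · exact hbef i0' (by omega) hzi0'

lemma claim_lift_hit (hp : IsStochastic p) (x y : S) (k L : ℕ) (hkL : k ≤ L) :
    eventProb p x L (fun z => (∀ i : Fin (L+1), (i:ℕ) < k → z i ≠ y)
        ∧ ∃ i : Fin (L+1), (i:ℕ) = k ∧ z i = y)
    = eventProb p x k
        (fun w => (∀ i : Fin (k+1), (i:ℕ) < k → w i ≠ y) ∧ w (Fin.last k) = y) := by
  rw [← eventProb_restrict hp x hkL
    (fun w => (∀ i : Fin (k+1), (i:ℕ) < k → w i ≠ y) ∧ w (Fin.last k) = y)]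
  refine eventProb_congr fun z => ?_
  unfold restrictPath
  constructor
  · rintro ⟨hbef, i0, hi0, hzi0⟩
    refine ⟨fun i hi => hbef (Fin.castLE (by omega) i) hi, ?_⟩
    rw [← hzi0]
    exact congrArg z (Fin.ext (by simpa using hi0.symm))
  · rintro ⟨hbef, hlast⟩
    constructor
    · intro i hi hy
      refine hbef ⟨(i : ℕ), by omega⟩ hi ?_
      rw [← hy]
      exact congrArg z (Fin.ext rfl)
    · exact ⟨Fin.castLE (by omega) (Fin.last k), by simp, hlast⟩

lemma claim_markov (hp : IsStochastic p) (x y u : S) (k N : ℕ) :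
    eventProb p x k (fun w => (∀ i : Fin (k+1), (i:ℕ) < k → w i ≠ y) ∧ w (Fin.last k) = y)
      * eventProb p y N (fun v => ∃ r : Fin (N+1), v r = u)
    = eventProb p x (k+N) (fun z =>
        ((∀ i : Fin (k+N+1), (i:ℕ) < k → z i ≠ y)
          ∧ (∃ i : Fin (k+N+1), (i:ℕ) = k ∧ z i = y))
        ∧ ∃ r : Fin (k+N+1), k ≤ (r:ℕ) ∧ (r:ℕ) ≤ k + N ∧ z r = u) := by
  rw [eventProb_mul hp x y k N (fun w => ∀ i : Fin (k+1), (i:ℕ) < k → w i ≠ y)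
    (fun v => ∃ r : Fin (N+1), v r = u)]
  refine eventProb_congr fun z => ?_
  unfold restrictPath suffixPath
  constructor
  · rintro ⟨⟨hbef, hlast⟩, r, hr⟩
    refine ⟨⟨?_, ?_⟩, ?_⟩
    · intro i hi hy
      refine hbef ⟨(i:ℕ), by omega⟩ hi ?_
      rw [← hy]
      exact congrArg z (Fin.ext rfl)
    · refine ⟨⟨k, by omega⟩, rfl, ?_⟩
      rw [← hlast]
      exact congrArg z (Fin.ext (by simp))
    · refine ⟨⟨k + (r:ℕ), by omega⟩, by simp, ?_, ?_⟩
      · simp only [Fin.val_mk]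
        have := r.is_le
        omega
      · exact hr
  · rintro ⟨⟨hbef, i0, hi0, hzi0⟩, r, hkr, hrkN, hzr⟩
    refine ⟨⟨fun i hi => hbef (Fin.castLE (by omega) i) hi, ?_⟩,
      ⟨(r:ℕ) - k, by omega⟩, ?_⟩
    · rw [← hzi0]
      exact congrArg z (Fin.ext (by simp [hi0.symm]))
    · rw [← hzr]
      refine congrArg z (Fin.ext ?_)
      simp only [Fin.val_mk]
      omega

lemma claim_null (hp : IsStochastic p) (x y u : S) (U : Finset S) (hu : u ∈ U)
    (hblock : ∀ m : ℕ,
      eventProb p x m (fun z => z (Fin.last m) ∈ U ∧ ∀ i : Fin (m + 1), z i ≠ y) = 0)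
    (m k : ℕ) (hkm : k ≤ m) :
    eventProb p x m (fun z => ∃ r : Fin (m+1), (r:ℕ) < k ∧ z r = u
      ∧ ∀ i : Fin (m+1), (i:ℕ) ≤ (r:ℕ) → z i ≠ y) = 0 := by
  refine le_antisymm ?_ (eventProb_nonneg hp x m _)
  have h1 : eventProb p x m (fun z => ∃ r : Fin (m+1), (r:ℕ) < k ∧ z r = u
        ∧ ∀ i : Fin (m+1), (i:ℕ) ≤ (r:ℕ) → z i ≠ y)
      ≤ ∑ n ∈ Finset.range k, eventProb p x m
        (fun z => ∃ r : Fin (m+1), (r:ℕ) = n ∧ z r = u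
          ∧ ∀ i : Fin (m+1), (i:ℕ) ≤ n → z i ≠ y) := by
    refine eventProb_le_sum hp fun z hz => ?_
    obtain ⟨r, hrk, hzr, hbef⟩ := hz
    exact ⟨(r:ℕ), Finset.mem_range.mpr hrk, r, rfl, hzr, fun i hi => hbef i (by omega)⟩
  refine h1.trans (le_of_eq (Finset.sum_eq_zero fun n hn => ?_))
  rw [Finset.mem_range] at hn
  have hnm : n ≤ m := by omega
  refine le_antisymm ?_ (eventProb_nonneg hp x m _)
  calc eventProb p x m (fun z => ∃ r : Fin (m+1), (r:ℕ) = n ∧ z r = u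
          ∧ ∀ i : Fin (m+1), (i:ℕ) ≤ n → z i ≠ y)
      = eventProb p x n (fun w => w (Fin.last n) = u ∧ ∀ i : Fin (n+1), w i ≠ y) := by
        rw [← eventProb_restrict hp x hnm
          (fun w => w (Fin.last n) = u ∧ ∀ i : Fin (n+1), w i ≠ y)]
        refine eventProb_congr fun z => ?_
        unfold restrictPath
        constructor
        · rintro ⟨r, hrn, hzr, hbef⟩
          constructor
          · rw [← hzr]
            exact congrArg z (Fin.ext (by simp [hrn.symm]))
          · intro i hy
            refine hbef (Fin.castLE (by omega) i) ?_ hy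
            simpa using i.is_le
        · rintro ⟨hlast, hall⟩
          refine ⟨⟨n, by omega⟩, rfl, ?_, ?_⟩
          · rw [← hlast]
            exact congrArg z (Fin.ext (by simp))
          · intro i hi hy
            refine hall ⟨(i:ℕ), by omega⟩ ?_
            rw [← hy]
            exact congrArg z (Fin.ext rfl)
      _ ≤ eventProb p x n
          (fun w => w (Fin.last n) ∈ U ∧ ∀ i : Fin (n+1), w i ≠ y) := by
        refine eventProb_mono hp fun w hw => ⟨?_, hw.2⟩
        rw [hw.1]
        exact hu
      _ = 0 := hblock n

lemma claim_surp (hp : IsStochastic p) (x : S) (s m : ℕ) (hsm : s ≤ m) :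
    eventProb p x m (fun z => ∃ i : Fin (m+1), (i:ℕ) = s
      ∧ ∀ j : Fin (m+1), (j:ℕ) < s → z j ≠ z i)
    = surpriseProb p x s := by
  unfold surpriseProb
  rw [← eventProb_restrict hp x hsm
    (fun w => ∀ i : Fin (s+1), (i:ℕ) < s → w i ≠ w (Fin.last s))]
  refine eventProb_congr fun z => ?_
  unfold restrictPath
  constructor
  · rintro ⟨i0, hi0, hall⟩
    intro i hi hy
    refine hall (Fin.castLE (by omega) i) hi ?_
    rw [hy]
    exact congrArg z (Fin.ext (by simp [hi0.symm]))
  · intro h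
    refine ⟨⟨s, by omega⟩, rfl, fun j hj hy => h ⟨(j:ℕ), by omega⟩ hj ?_⟩
    exact (congrArg z (Fin.ext rfl)).trans (hy.trans (congrArg z (Fin.ext (by simp))))

def Fev {S : Type*} (y : S) (m s k : ℕ) (u : S) : (Fin (m+1) → S) → Prop := fun z =>
  (∃ i : Fin (m+1), (i:ℕ) = s ∧ z i = u) ∧ (∀ i : Fin (m+1), (i:ℕ) < s → z i ≠ u)
  ∧ (∃ i : Fin (m+1), (i:ℕ) = k ∧ z i = y) ∧ (∀ i : Fin (m+1), (i:ℕ) < k → z i ≠ y)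

lemma claim_decomp (hp : IsStochastic p) (x y u : S) (U : Finset S) (hu : u ∈ U)
    (hblock : ∀ m : ℕ,
      eventProb p x m (fun z => z (Fin.last m) ∈ U ∧ ∀ i : Fin (m + 1), z i ≠ y) = 0)
    (t0 N k m : ℕ) (hN : 0 < N) (hk1 : t0+1 ≤ k) (hkt : k ≤ t0+N) (hm : m = t0+2*N) :
    eventProb p x k (fun w => (∀ i : Fin (k+1), (i:ℕ) < k → w i ≠ y) ∧ w (Fin.last k) = y)
      * eventProb p y N (fun v => ∃ r : Fin (N+1), v r = u)
    ≤ ∑ s ∈ Finset.Icc (t0+1) m, eventProb p x m (Fev y m s k u) := by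
  classical
  have hkN : k + N ≤ m := by omega
  rw [claim_markov hp x y u k N]
  have hlift : eventProb p x (k+N) (fun z =>
        ((∀ i : Fin (k+N+1), (i:ℕ) < k → z i ≠ y)
          ∧ (∃ i : Fin (k+N+1), (i:ℕ) = k ∧ z i = y))
        ∧ ∃ r : Fin (k+N+1), k ≤ (r:ℕ) ∧ (r:ℕ) ≤ k + N ∧ z r = u)
      = eventProb p x m (fun z =>
        ((∀ i : Fin (m+1), (i:ℕ) < k → z i ≠ y)
          ∧ (∃ i : Fin (m+1), (i:ℕ) = k ∧ z i = y))
        ∧ ∃ r : Fin (m+1), k ≤ (r:ℕ) ∧ (r:ℕ) ≤ k + N ∧ z r = u) := by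
    rw [← eventProb_restrict hp x hkN (fun z : Fin (k+N+1) → S =>
        ((∀ i : Fin (k+N+1), (i:ℕ) < k → z i ≠ y)
          ∧ (∃ i : Fin (k+N+1), (i:ℕ) = k ∧ z i = y))
        ∧ ∃ r : Fin (k+N+1), k ≤ (r:ℕ) ∧ (r:ℕ) ≤ k + N ∧ z r = u)]
    refine (eventProb_congr fun z => ?_).symm
    unfold restrictPath
    constructor
    · rintro ⟨⟨hbef, iy, hiy, hziy⟩, r, hkr, hrkN, hzr⟩
      refine ⟨⟨?_, ?_⟩, ?_⟩
      · intro i hi hy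
        refine hbef (Fin.castLE (show k+N+1 ≤ m+1 by omega) i) hi hy
      · refine ⟨⟨(iy:ℕ), by omega⟩, hiy, ?_⟩
        rw [← hziy]
        exact congrArg z (Fin.ext rfl)
      · refine ⟨⟨(r:ℕ), by omega⟩, hkr, hrkN, ?_⟩
        rw [← hzr]
        exact congrArg z (Fin.ext rfl)
    · rintro ⟨⟨hbef, iy, hiy, hziy⟩, r, hkr, hrkN, hzr⟩
      refine ⟨⟨?_, ?_⟩, ?_⟩
      · intro i hi hy
        refine hbef ⟨(i:ℕ), by omega⟩ hi ?_
        rw [← hy]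
        exact congrArg z (Fin.ext rfl)
      · refine ⟨⟨(iy:ℕ), by omega⟩, hiy, ?_⟩
        rw [← hziy]
        exact congrArg z (Fin.ext rfl)
      · refine ⟨⟨(r:ℕ), by omega⟩, hkr, hrkN, ?_⟩
        rw [← hzr]
        exact congrArg z (Fin.ext rfl)
  rw [hlift]
  have himp : ∀ z : Fin (m+1) → S,
      (((∀ i : Fin (m+1), (i:ℕ) < k → z i ≠ y)
          ∧ (∃ i : Fin (m+1), (i:ℕ) = k ∧ z i = y))
        ∧ ∃ r : Fin (m+1), k ≤ (r:ℕ) ∧ (r:ℕ) ≤ k + N ∧ z r = u)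
      → (∃ r : Fin (m+1), (r:ℕ) < k ∧ z r = u
          ∧ ∀ i : Fin (m+1), (i:ℕ) ≤ (r:ℕ) → z i ≠ y)
        ∨ ∃ s ∈ Finset.Icc (t0+1) m, Fev y m s k u z := by
    rintro z ⟨⟨hbefy, iy, hiy, hziy⟩, r, hkr, hrkN, hzr⟩
    have hQ : ∃ n, ∃ hn : n < m + 1, z ⟨n, hn⟩ = u := ⟨(r:ℕ), r.isLt, by rwa [Fin.eta]⟩
    set s := Nat.find hQ with hsdef
    obtain ⟨hslt, hzs⟩ := Nat.find_spec hQ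
    have hmin : ∀ n < s, ¬∃ hn : n < m + 1, z ⟨n, hn⟩ = u := fun n hn => Nat.find_min hQ hn
    have hsler : s ≤ (r:ℕ) := Nat.find_min' hQ ⟨r.isLt, by rwa [Fin.eta]⟩
    by_cases hsk : s < k
    · left
      refine ⟨⟨s, hslt⟩, hsk, hzs, ?_⟩
      intro i hi
      exact hbefy i (by simp only [Fin.val_mk] at hi; omega)
    · right
      refine ⟨s, Finset.mem_Icc.mpr ⟨by omega, by omega⟩, ⟨⟨s, hslt⟩, rfl, hzs⟩,
        ?_, ⟨iy, hiy, hziy⟩, hbefy⟩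
      intro i hi hzi
      exact hmin (i:ℕ) hi ⟨i.isLt, by rwa [Fin.eta]⟩
  calc eventProb p x m _
      ≤ eventProb p x m (fun z => ∃ r : Fin (m+1), (r:ℕ) < k ∧ z r = u
          ∧ ∀ i : Fin (m+1), (i:ℕ) ≤ (r:ℕ) → z i ≠ y)
        + eventProb p x m (fun z => ∃ s ∈ Finset.Icc (t0+1) m, Fev y m s k u z) :=
        eventProb_le_add hp himp
    _ = eventProb p x m (fun z => ∃ s ∈ Finset.Icc (t0+1) m, Fev y m s k u z) := by
        rw [claim_null hp x y u U hu hblock m k (by omega), zero_add]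
    _ ≤ ∑ s ∈ Finset.Icc (t0+1) m, eventProb p x m (Fev y m s k u) :=
        eventProb_le_sum hp fun z hz => hz

lemma claim_final (hp : IsStochastic p) (x y : S) (U : Finset S) (t0 N m s : ℕ)
    (hs : s ≤ m) :
    ∑ k ∈ Finset.Icc (t0+1) (t0+N), ∑ u ∈ U, eventProb p x m (Fev y m s k u)
    ≤ surpriseProb p x s := by
  classical
  rw [← claim_surp hp x s m hs, ← Finset.sum_product']
  refine eventProb_sum_le hp ?_ ?_
  · rintro ⟨k, u⟩ hku z ⟨⟨i0, hi0, hzi0⟩, hne, -, -⟩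
    exact ⟨i0, hi0, fun j hj hy => hne j hj (hy.trans hzi0)⟩
  · rintro z ⟨k, u⟩ hku ⟨k', u'⟩ hku' ⟨⟨i0, hi0, hzi0⟩, -, ⟨iy, hiy, hziy⟩, hbefy⟩
      ⟨⟨i0', hi0', hzi0'⟩, -, ⟨iy', hiy', hziy'⟩, hbefy'⟩
    have hi : i0 = i0' := Fin.ext (by omega)
    have hus : u = u' := by
      have e1 : z i0 = u := hzi0
      have e2 : z i0' = u' := hzi0'
      rw [← e1, hi, e2]
    have hks : k = k' := by
      by_contra hne
      rcases Nat.lt_or_ge k k' with h | h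
      · exact hbefy' iy (by omega) hziy
      · exact hbefy iy' (by omega) hziy'
    rw [Prod.mk.injEq]
    exact ⟨hks, hus⟩

end Helpers

/-- Lemma 18: suppose the chain started at `x` cannot reach `U` without first visiting
`y`.  Writing `Z_s` for the number of states of `U` visited by time `s`, for any
`t, N > 0` there is `s` with `t ≤ s < t + 2N` and
`P_x(S_s) ≥ P_x(t ≤ τ(y) < t + N) · E_y[Z_N] / (2N)`. -/
theorem general_surprise_lower_bound {S : Type*} [Fintype S] [DecidableEq S]
    (p : Matrix S S ℝ) (hp : IsStochastic p) (x y : S) (U : Finset S)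
    (hblock : ∀ m : ℕ,
      eventProb p x m (fun z => z (Fin.last m) ∈ U ∧ ∀ i : Fin (m + 1), z i ≠ y) = 0)
    (t N : ℕ) (ht : 0 < t) (hN : 0 < N) :
    ∃ s : ℕ, t ≤ s ∧ s < t + 2 * N ∧
      eventProb p x (t + N - 1)
          (fun z => (∀ i : Fin (t + N - 1 + 1), (i : ℕ) < t → z i ≠ y) ∧
            ∃ i : Fin (t + N - 1 + 1), t ≤ (i : ℕ) ∧ z i = y) *
        (∑ z : Fin (N + 1) → S, (if z 0 = y then pathWeight p z else 0) *
          ((U.filter fun u => ∃ r : Fin (N + 1), z r = u).card : ℝ)) / (2 * N) ≤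
      surpriseProb p x s := by
  obtain ⟨t0, rfl⟩ : ∃ t0, t = t0 + 1 := ⟨t - 1, by omega⟩
  rw [show t0 + 1 + N - 1 = t0 + N from by omega]
  have hPcongr : eventProb p x (t0+N)
      (fun z : Fin (t0+N+1) → S =>
        (∀ i : Fin (t0+N+1), (i : ℕ) < t0+1 → z i ≠ y) ∧ ∃ i : Fin (t0+N+1), t0+1 ≤ (i : ℕ) ∧ z i = y)
      = eventProb p x (t0+N)
      (fun z => (∀ i : Fin (t0+N+1), (i:ℕ) < t0+1 → z i ≠ y)
        ∧ ∃ i : Fin (t0+N+1), t0+1 ≤ (i:ℕ) ∧ z i = y) := rfl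
  have key : eventProb p x (t0+N)
        (fun z : Fin (t0+N+1) → S =>
          (∀ i : Fin (t0+N+1), (i : ℕ) < t0+1 → z i ≠ y) ∧ ∃ i : Fin (t0+N+1), t0+1 ≤ (i : ℕ) ∧ z i = y) *
        (∑ z : Fin (N + 1) → S, (if z 0 = y then pathWeight p z else 0) *
          ((U.filter fun u => ∃ r : Fin (N + 1), z r = u).card : ℝ))
      ≤ ∑ s ∈ Finset.Icc (t0+1) (t0+2*N), surpriseProb p x s := by
    rw [hPcongr, claim_hit_split hp x y t0 N, claim_E y U N, Finset.sum_mul_sum]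
    calc ∑ k ∈ Finset.Icc (t0+1) (t0+N), ∑ u ∈ U,
          eventProb p x (t0+N)
            (fun z => (∀ i : Fin (t0+N+1), (i:ℕ) < k → z i ≠ y)
              ∧ ∃ i : Fin (t0+N+1), (i:ℕ) = k ∧ z i = y)
          * eventProb p y N (fun v => ∃ r : Fin (N+1), v r = u)
        ≤ ∑ k ∈ Finset.Icc (t0+1) (t0+N), ∑ u ∈ U,
            ∑ s ∈ Finset.Icc (t0+1) (t0+2*N),
              eventProb p x (t0+2*N) (Fev y (t0+2*N) s k u) := by
          refine Finset.sum_le_sum fun k hk => Finset.sum_le_sum fun u hu => ?_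
          rw [Finset.mem_Icc] at hk
          rw [claim_lift_hit hp x y k (t0+N) hk.2]
          exact claim_decomp hp x y u U hu hblock t0 N k (t0+2*N) hN hk.1 hk.2 rfl
      _ = ∑ s ∈ Finset.Icc (t0+1) (t0+2*N), ∑ k ∈ Finset.Icc (t0+1) (t0+N), ∑ u ∈ U,
            eventProb p x (t0+2*N) (Fev y (t0+2*N) s k u) := by
          rw [Finset.sum_congr rfl fun k _ => Finset.sum_comm, Finset.sum_comm]
      _ ≤ ∑ s ∈ Finset.Icc (t0+1) (t0+2*N), surpriseProb p x s := by
          refine Finset.sum_le_sum fun s hs => ?_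
          rw [Finset.mem_Icc] at hs
          exact claim_final hp x y U t0 N (t0+2*N) s hs.2
  have hne : (Finset.Icc (t0+1) (t0+2*N)).Nonempty :=
    ⟨t0+1, Finset.mem_Icc.mpr ⟨le_refl _, by omega⟩⟩
  have h2N : (2 * (N:ℝ)) ≠ 0 := by positivity
  obtain ⟨s, hsmem, hle⟩ := Finset.exists_le_of_sum_le hne
    (show (∑ _s ∈ Finset.Icc (t0+1) (t0+2*N),
        eventProb p x (t0+N)
          (fun z : Fin (t0+N+1) → S =>
            (∀ i : Fin (t0+N+1), (i : ℕ) < t0+1 → z i ≠ y) ∧ ∃ i : Fin (t0+N+1), t0+1 ≤ (i : ℕ) ∧ z i = y) *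
          (∑ z : Fin (N + 1) → S, (if z 0 = y then pathWeight p z else 0) *
            ((U.filter fun u => ∃ r : Fin (N + 1), z r = u).card : ℝ)) / (2 * N))
      ≤ ∑ s ∈ Finset.Icc (t0+1) (t0+2*N), surpriseProb p x s from by
      rw [Finset.sum_const, Nat.card_Icc,
        show t0 + 2*N + 1 - (t0+1) = 2*N from by omega, nsmul_eq_mul]
      refine le_trans (le_of_eq ?_) key
      push_cast
      rw [mul_comm, div_mul_cancel₀ _ h2N])
  rw [Finset.mem_Icc] at hsmem
  exact ⟨s, hsmem.1, by omega, hle⟩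
end
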